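/- Let k be a field of characteristic ≠ 2, ℓ/k a quadratic field extension, and c = (c₁, c₂, c₃) ∈ k³ an ℓ-admissible triple. Then: (i) A(ℓ, c) is not associative if and only if (c₁, c₂) ≠ (1, 0) and (c₁, c₃) ≠ (0, 0); (ii) A(ℓ, c) is an associative, non-commutative division algebra whose center equals k·1 if and only if (c₁, c₂) = (1, 0); (iii) A(ℓ, c) is commutative (and associative) if and only if (c₁, c₃) = (0, 0). -/
import Mathlib


open Module Function

variable {k ℓ : Type}

/-- The function `q_c : ℓ × ℓ → ℓ` associated with a triple `c = (c₁, c₂, c₃) ∈ k³`. -/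
def qc [Field k] [Field ℓ] [Algebra k ℓ] (σ : ℓ ≃ₐ[k] ℓ) (c : k × k × k) (x y : ℓ) : ℓ :=
  (1 - algebraMap k ℓ c.1) * x ^ 2 + algebraMap k ℓ c.1 * (x * σ x)
    - algebraMap k ℓ c.2.1 * y ^ 2 - algebraMap k ℓ c.2.2 * (y * σ y)

/-- A triple `c ∈ k³` is `ℓ`-admissible if `q_c` is anisotropic. -/
def IsAdmissibleTriple [Field k] [Field ℓ] [Algebra k ℓ] (σ : ℓ ≃ₐ[k] ℓ)
    (c : k × k × k) : Prop :=
  ∀ x y : ℓ, qc σ c x y = 0 → x = 0 ∧ y = 0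

/-- The multiplication of the 4-dimensional `k`-algebra `A(ℓ, c)` on `ℓ × ℓ`. -/
def Amul [Field k] [Field ℓ] [Algebra k ℓ] (σ : ℓ ≃ₐ[k] ℓ) (c : k × k × k)
    (p q : ℓ × ℓ) : ℓ × ℓ :=
  (p.1 * q.1 + (algebraMap k ℓ c.2.1 * p.2 + algebraMap k ℓ c.2.2 * σ p.2) * q.2,
   p.2 * q.1 + ((1 - algebraMap k ℓ c.1) * p.1 + algebraMap k ℓ c.1 * σ p.1) * q.2)

/-- Let `c = (c₁, c₂, c₃) ∈ k³` be an `ℓ`-admissible triple. Then: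
(i) `A(ℓ, c)` is not associative iff `(c₁, c₂) ≠ (1, 0)` and `(c₁, c₃) ≠ (0, 0)`;
(ii) `A(ℓ, c)` is an associative, non-commutative division algebra whose center (set of
elements commuting with everything) equals `k·1` iff `(c₁, c₂) = (1, 0)`;
(iii) `A(ℓ, c)` is commutative and associative iff `(c₁, c₃) = (0, 0)`. -/

lemma quad_aux {k ℓ : Type} [Field k] [Field ℓ] [Algebra k ℓ]
    (hquad : finrank k ℓ = 2) (σ : ℓ ≃ₐ[k] ℓ) {a : ℓ} (ha : σ a ≠ a) :
    (∀ x : ℓ, σ (σ x) = x) ∧ (∀ x : ℓ, σ x = x → ∃ t, x = algebraMap k ℓ t) := by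
  have hinj := (algebraMap k ℓ).injective
  have hfixC : ∀ t : k, σ (algebraMap k ℓ t) = algebraMap k ℓ t := σ.commutes
  have hsub : a - σ a ≠ 0 := sub_ne_zero.mpr ha.symm
  have li : LinearIndependent k ![(1:ℓ), a] := by
    rw [LinearIndependent.pair_iff]
    intro s t hst
    have hst' : algebraMap k ℓ s + algebraMap k ℓ t * a = 0 := by
      simpa [Algebra.smul_def] using hst
    by_cases ht : t = 0
    · refine ⟨hinj ?_, ht⟩
      simp [ht] at hst'
      simpa using hst'
    · exfalso
      have hct : algebraMap k ℓ t ≠ 0 := fun h => ht (hinj (by simpa using h))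
      have hae : a = algebraMap k ℓ (-s / t) := by
        rw [map_div₀, map_neg]
        field_simp
        linear_combination hst'
      exact ha (by rw [hae, hfixC])
  have hcard : Fintype.card (Fin 2) = finrank k ℓ := by simp [hquad]
  let B := basisOfLinearIndependentOfCardEqFinrank li hcard
  have hB : ⇑B = ![(1:ℓ), a] := coe_basisOfLinearIndependentOfCardEqFinrank li hcard
  have hrep : ∀ x : ℓ, ∃ s t : k, x = algebraMap k ℓ s + algebraMap k ℓ t * a := by
    intro x
    refine ⟨B.repr x 0, B.repr x 1, ?_⟩
    have h := B.sum_repr x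
    rw [Fin.sum_univ_two] at h
    simp only [hB, Matrix.cons_val_zero, Matrix.cons_val_one, Matrix.head_cons,
      Algebra.smul_def, mul_one] at h
    exact h.symm
  obtain ⟨u, v, huv⟩ := hrep (a * a)
  have h2 : σ a * σ a = algebraMap k ℓ u + algebraMap k ℓ v * σ a := by
    have := congrArg σ huv
    simpa [map_add, map_mul, hfixC] using this
  have key : (a - σ a) * (a + σ a - algebraMap k ℓ v) = 0 := by
    linear_combination huv - h2
  have hσa : σ a = algebraMap k ℓ v - a := by
    have h3 := (mul_eq_zero.mp key).resolve_left hsub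
    linear_combination h3
  have hσσa : σ (σ a) = a := by
    rw [hσa, map_sub, hfixC, hσa]; ring
  constructor
  · intro x
    obtain ⟨s, t, hst⟩ := hrep x
    rw [hst]
    simp [map_add, map_mul, hfixC, hσσa]
  · intro x hx
    obtain ⟨s, t, hst⟩ := hrep x
    subst hst
    have e : σ (algebraMap k ℓ s + algebraMap k ℓ t * a)
        = algebraMap k ℓ s + algebraMap k ℓ t * σ a := by
      simp [map_add, map_mul, hfixC]
    have h4 : algebraMap k ℓ t * (σ a - a) = 0 := by
      linear_combination hx - e
    have h5 : algebraMap k ℓ t = 0 := by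
      rcases mul_eq_zero.mp h4 with h | h
      · exact h
      · exact absurd (sub_eq_zero.mp h) ha
    exact ⟨s, by rw [h5, zero_mul, add_zero]⟩

theorem Amul_trichotomy [Field k] [Field ℓ] [Algebra k ℓ]
    (hchar : (2 : k) ≠ 0) (hquad : finrank k ℓ = 2)
    (σ : ℓ ≃ₐ[k] ℓ) (hσ : ∃ x : ℓ, σ x ≠ x)
    (c : k × k × k) (hc : IsAdmissibleTriple σ c) :
    -- (i)
    ((¬ ∀ p q r : ℓ × ℓ, Amul σ c (Amul σ c p q) r = Amul σ c p (Amul σ c q r)) ↔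
      ((c.1, c.2.1) ≠ ((1 : k), (0 : k)) ∧ (c.1, c.2.2) ≠ ((0 : k), (0 : k)))) ∧
    -- (ii)
    (((∀ p q r : ℓ × ℓ, Amul σ c (Amul σ c p q) r = Amul σ c p (Amul σ c q r)) ∧
      (¬ ∀ p q : ℓ × ℓ, Amul σ c p q = Amul σ c q p) ∧
      {z : ℓ × ℓ | ∀ p : ℓ × ℓ, Amul σ c z p = Amul σ c p z} =
        Set.range (fun t : k => ((algebraMap k ℓ t, 0) : ℓ × ℓ))) ↔
      (c.1, c.2.1) = ((1 : k), (0 : k))) ∧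
    -- (iii)
    (((∀ p q : ℓ × ℓ, Amul σ c p q = Amul σ c q p) ∧
      (∀ p q r : ℓ × ℓ, Amul σ c (Amul σ c p q) r = Amul σ c p (Amul σ c q r))) ↔
      (c.1, c.2.2) = ((0 : k), (0 : k))) := by
  obtain ⟨a, ha⟩ := hσ
  obtain ⟨hσσ, hfix⟩ := quad_aux hquad σ ha
  have hinj := (algebraMap k ℓ).injective
  have hfixC : ∀ t : k, σ (algebraMap k ℓ t) = algebraMap k ℓ t := σ.commutes
  have hsub : a - σ a ≠ 0 := sub_ne_zero.mpr ha.symm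
  have hsub' : σ a - a ≠ 0 := sub_ne_zero.mpr ha
  have ec : ∀ x : k, algebraMap k ℓ x = 0 → x = 0 := fun x h => hinj (by simpa using h)
  -- (A) associativity when c₁ = 1, c₂ = 0
  have hA : c.1 = 1 → c.2.1 = 0 →
      ∀ p q r : ℓ × ℓ, Amul σ c (Amul σ c p q) r = Amul σ c p (Amul σ c q r) := by
    intro hc1 hc2 p q r
    have e1 : algebraMap k ℓ c.1 = 1 := by rw [hc1, map_one]
    have e2 : algebraMap k ℓ c.2.1 = 0 := by rw [hc2, map_zero]
    simp only [Amul, e1, e2, sub_self, zero_mul, one_mul, zero_add, map_add, map_mul, hσσ,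
      AlgEquiv.commutes]
    rw [Prod.mk.injEq]
    constructor <;> ring
  -- (B) commutativity when c₁ = 0, c₃ = 0
  have hB : c.1 = 0 → c.2.2 = 0 →
      ∀ p q : ℓ × ℓ, Amul σ c p q = Amul σ c q p := by
    intro hc1 hc3 p q
    have e1 : algebraMap k ℓ c.1 = 0 := by rw [hc1, map_zero]
    have e3 : algebraMap k ℓ c.2.2 = 0 := by rw [hc3, map_zero]
    simp only [Amul, e1, e3, sub_zero, zero_mul, one_mul, add_zero, mul_zero]
    rw [Prod.mk.injEq]
    constructor <;> ring
  -- (B') associativity when c₁ = 0, c₃ = 0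
  have hB' : c.1 = 0 → c.2.2 = 0 →
      ∀ p q r : ℓ × ℓ, Amul σ c (Amul σ c p q) r = Amul σ c p (Amul σ c q r) := by
    intro hc1 hc3 p q r
    have e1 : algebraMap k ℓ c.1 = 0 := by rw [hc1, map_zero]
    have e3 : algebraMap k ℓ c.2.2 = 0 := by rw [hc3, map_zero]
    simp only [Amul, e1, e3, sub_zero, zero_mul, one_mul, add_zero, mul_zero]
    rw [Prod.mk.injEq]
    constructor <;> ring
  -- (C) associativity forces (1,0) or (0,0)
  have hCC : (∀ p q r : ℓ × ℓ, Amul σ c (Amul σ c p q) r = Amul σ c p (Amul σ c q r)) →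
      (c.1 = 1 ∧ c.2.1 = 0) ∨ (c.1 = 0 ∧ c.2.2 = 0) := by
    intro H
    have h1 := H (a, 0) (a, 0) ((0:ℓ), (1:ℓ))
    simp [Amul] at h1
    have key1 : algebraMap k ℓ c.1 * (1 - algebraMap k ℓ c.1) * (a - σ a) ^ 2 = 0 := by
      linear_combination h1
    have hsq : (a - σ a) ^ 2 ≠ 0 := pow_ne_zero _ hsub
    have h' := (mul_eq_zero.mp key1).resolve_right hsq
    have h2 := H ((0:ℓ), (1:ℓ)) ((0:ℓ), a) ((0:ℓ), (1:ℓ))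
    simp [Amul] at h2
    rcases mul_eq_zero.mp h' with h | h
    · -- c₁ = 0
      have hc1 : c.1 = 0 := ec _ h
      right
      refine ⟨hc1, ?_⟩
      have e1 : algebraMap k ℓ c.1 = 0 := by rw [hc1, map_zero]
      rw [e1] at h2
      have k3 : algebraMap k ℓ c.2.2 * (a - σ a) = 0 := by
        linear_combination h2
      rcases mul_eq_zero.mp k3 with h3 | h3
      · exact ec _ h3
      · exact absurd h3 hsub
    · -- c₁ = 1
      have hc1 : c.1 = 1 := by
        have : algebraMap k ℓ c.1 = algebraMap k ℓ 1 := by rw [map_one]; linear_combination -h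
        exact hinj this
      left
      refine ⟨hc1, ?_⟩
      have e1 : algebraMap k ℓ c.1 = 1 := by rw [hc1, map_one]
      rw [e1] at h2
      have k2 : algebraMap k ℓ c.2.1 * (σ a - a) = 0 := by
        linear_combination h2
      rcases mul_eq_zero.mp k2 with h3 | h3
      · exact ec _ h3
      · exact absurd h3 hsub'
  -- (D) commutativity forces (0,0)
  have hD : (∀ p q : ℓ × ℓ, Amul σ c p q = Amul σ c q p) → c.1 = 0 ∧ c.2.2 = 0 := by
    intro H
    have h := H (a, 0) ((0:ℓ), (1:ℓ))
    simp [Amul] at h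
    have k1 : algebraMap k ℓ c.1 * (σ a - a) = 0 := by linear_combination h
    have hc1 : c.1 = 0 := by
      rcases mul_eq_zero.mp k1 with h3 | h3
      · exact ec _ h3
      · exact absurd h3 hsub'
    have h' := H ((0:ℓ), a) ((0:ℓ), (1:ℓ))
    simp [Amul] at h'
    have k3 : algebraMap k ℓ c.2.2 * (σ a - a) = 0 := by linear_combination h'
    have hc3 : c.2.2 = 0 := by
      rcases mul_eq_zero.mp k3 with h3 | h3
      · exact ec _ h3
      · exact absurd h3 hsub'
    exact ⟨hc1, hc3⟩
  -- non-commutativity when c₁ = 1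
  have hNC : c.1 = 1 → ¬ (∀ p q : ℓ × ℓ, Amul σ c p q = Amul σ c q p) := by
    intro hc1 H
    have e1 : algebraMap k ℓ c.1 = 1 := by rw [hc1, map_one]
    have h := H (a, 0) ((0:ℓ), (1:ℓ))
    simp [Amul, e1] at h
    exact ha h
  -- center when c₁ = 1
  have hZ : c.1 = 1 →
      {z : ℓ × ℓ | ∀ p : ℓ × ℓ, Amul σ c z p = Amul σ c p z} =
        Set.range (fun t : k => ((algebraMap k ℓ t, 0) : ℓ × ℓ)) := by
    intro hc1
    have e1 : algebraMap k ℓ c.1 = 1 := by rw [hc1, map_one]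
    ext z
    simp only [Set.mem_setOf_eq, Set.mem_range]
    constructor
    · intro hz
      have h1 := hz (a, 0)
      simp [Amul, e1] at h1
      have hz2 : z.2 = 0 := by
        have k1 : z.2 * (a - σ a) = 0 := by linear_combination h1.2
        rcases mul_eq_zero.mp k1 with h3 | h3
        · exact h3
        · exact absurd h3 hsub
      have h2 := hz ((0:ℓ), (1:ℓ))
      simp [Amul, e1, hz2] at h2
      obtain ⟨t, ht⟩ := hfix z.1 h2
      exact ⟨t, Prod.ext ht.symm hz2.symm⟩
    · rintro ⟨t, rfl⟩ p
      simp only [Amul, map_zero, mul_zero, zero_mul, add_zero, zero_add, hfixC]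
      rw [Prod.mk.injEq]
      constructor <;> ring
  refine ⟨⟨?_, ?_⟩, ⟨?_, ?_⟩, ⟨?_, ?_⟩⟩
  · intro hna
    constructor
    · intro hP; rw [Prod.mk.injEq] at hP
      exact hna (hA hP.1 hP.2)
    · intro hQ; rw [Prod.mk.injEq] at hQ
      exact hna (hB' hQ.1 hQ.2)
  · rintro ⟨hP, hQ⟩ H
    rcases hCC H with ⟨h1, h2⟩ | ⟨h1, h2⟩
    · exact hP (by rw [Prod.mk.injEq]; exact ⟨h1, h2⟩)
    · exact hQ (by rw [Prod.mk.injEq]; exact ⟨h1, h2⟩)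
  · rintro ⟨Hass, Hnc, _⟩
    rcases hCC Hass with ⟨h1, h2⟩ | ⟨h1, h2⟩
    · rw [Prod.mk.injEq]; exact ⟨h1, h2⟩
    · exact absurd (hB h1 h2) Hnc
  · intro hP; rw [Prod.mk.injEq] at hP
    exact ⟨hA hP.1 hP.2, hNC hP.1, hZ hP.1⟩
  · rintro ⟨Hcomm, _⟩
    rw [Prod.mk.injEq]; exact hD Hcomm
  · intro hQ; rw [Prod.mk.injEq] at hQ
    exact ⟨hB hQ.1 hQ.2, hB' hQ.1 hQ.2⟩
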